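/- Let M ∈ ℝ^{n×n} be symmetric positive definite, let G ∈ ℝ^{n×m} have full column rank, let b, ψ*, ψ ∈ ℝⁿ and λ ∈ ℝᵐ satisfy M ψ + G λ = b and G^⊤ ψ = G^⊤ ψ*. If ψ* = M^{-1} b, then λ = 0 and ψ = ψ* hold for any solution of the system; conversely, if λ = 0 then G^⊤ (M^{-1} b − ψ*) = 0. In particular, when the intermediate mesh field equals the local ℓ²-projection M^{-1} b of the particle data, the Lagrange multiplier of the PDE-constrained particle–mesh projection vanishes identically. -/

import Mathlib

open Matrix

/-- Consistency of the fully-discrete PDE-constrained particle–mesh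
projection: if the intermediate mesh field equals the local ℓ²-projection
`M⁻¹ b` of the particle data, then the Lagrange multiplier vanishes and the
state equals the intermediate field; conversely, if the multiplier vanishes
then `Gᵀ(M⁻¹ b − ψ*) = 0`. -/
theorem stmt_12 (n m : ℕ) (M : Matrix (Fin n) (Fin n) ℝ) (hM : M.PosDef)
    (G : Matrix (Fin n) (Fin m) ℝ)
    (hG : ∀ c : Fin m → ℝ, G.mulVec c = 0 → c = 0)
    (b ψs ψ : Fin n → ℝ) (lam : Fin m → ℝ)
    (hsys1 : M.mulVec ψ + G.mulVec lam = b)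
    (hsys2 : Gᵀ.mulVec ψ = Gᵀ.mulVec ψs) :
    (ψs = M⁻¹.mulVec b → lam = 0 ∧ ψ = ψs)
    ∧ (lam = 0 → Gᵀ.mulVec (M⁻¹.mulVec b - ψs) = 0) := by
  have hdet : IsUnit M.det := isUnit_iff_ne_zero.mpr (ne_of_gt hM.det_pos)
  have hinv : M⁻¹ * M = 1 := nonsing_inv_mul M hdet
  have hψ : ψ = M⁻¹.mulVec (b - G.mulVec lam) := by
    have h1 : M.mulVec ψ = b - G.mulVec lam := by
      rw [← hsys1]; ring_nf
    have := congrArg (M⁻¹.mulVec) h1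
    rwa [mulVec_mulVec, hinv, one_mulVec] at this
  constructor
  · intro hψs
    have hMinv : (M⁻¹).PosDef := hM.inv
    -- Gᵀ M⁻¹ G lam = 0
    have key : Gᵀ.mulVec (M⁻¹.mulVec (G.mulVec lam)) = 0 := by
      have h2 : Gᵀ.mulVec ψ = Gᵀ.mulVec (M⁻¹.mulVec b) - Gᵀ.mulVec (M⁻¹.mulVec (G.mulVec lam)) := by
        rw [hψ, mulVec_sub, mulVec_sub]
      rw [hsys2, hψs] at h2
      exact sub_eq_self.mp h2.symm
    have hdot : (G.mulVec lam) ⬝ᵥ (M⁻¹.mulVec (G.mulVec lam)) = 0 := by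
      have := congrArg (fun w => lam ⬝ᵥ w) key
      rw [dotProduct_mulVec, vecMul_transpose, dotProduct_zero] at this; exact this
    have hv : G.mulVec lam = 0 := by
      by_contra hvne
      exact absurd hdot (ne_of_gt (by simpa using hMinv.dotProduct_mulVec_pos hvne))
    have hlam0 : lam = 0 := hG _ hv
    refine ⟨hlam0, ?_⟩
    rw [hψ, hlam0, mulVec_zero, sub_zero, hψs]
  · intro hlam
    have hψb : ψ = M⁻¹.mulVec b := by rw [hψ, hlam, mulVec_zero, sub_zero]
    rw [mulVec_sub, ← hψb, hsys2, sub_self]
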